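/- Assume additionally ⟨v, S v⟩ > 0 for every nonzero v ∈ V. If r_R ∈ W minimizes r ↦ ‖y − r‖_R² over W and r_add ∈ V minimizes v ↦ ‖y − v‖_*² over V (r_add is unique by the positivity assumption), then r_add is the unique minimizer over v ∈ V of ‖r_R − v‖_*²; that is, the ‖·‖_*-orthogonal projection of the penalized estimator r_R onto V equals r_add, independently of R (Proposition 4: P_* r̂_R = r̂_add). -/
import Mathlib


open scoped RealInnerProductSpace

private lemma quad_aux {a b : ℝ} (ha : 0 ≤ a) (h : ∀ t : ℝ, 0 ≤ a * t ^ 2 + b * t) :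
    b = 0 := by
  by_contra hb
  have h1 := h (-b / (a + 1))
  have hpos : (0:ℝ) < a + 1 := by linarith
  have key : a * (-b / (a + 1)) ^ 2 + b * (-b / (a + 1)) = -b ^ 2 / (a + 1) ^ 2 := by
    field_simp; ring
  rw [key] at h1
  have hneg : -b ^ 2 / (a + 1) ^ 2 < 0 :=
    div_neg_of_neg_of_pos (by nlinarith [pow_pos (abs_pos.mpr hb) 2, sq_abs b]) (by positivity)
  linarith

private lemma ortho_aux
    {H : Type*} [NormedAddCommGroup H] [InnerProductSpace ℝ H]
    (S : H →L[ℝ] H)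
    (hS_sym : ∀ x y : H, ⟪S x, y⟫ = ⟪x, S y⟫)
    (hS_psd : ∀ x : H, 0 ≤ ⟪x, S x⟫)
    (a v : H)
    (h : ∀ t : ℝ, ⟪a, S a⟫ ≤ ⟪a - t • v, S (a - t • v)⟫) :
    ⟪a, S v⟫ = 0 := by
  have h1 : ⟪v, S a⟫ = ⟪a, S v⟫ := by rw [← hS_sym, real_inner_comm]
  have expand : ∀ t : ℝ, ⟪a - t • v, S (a - t • v)⟫
      = ⟪a, S a⟫ + (⟪v, S v⟫ * t ^ 2 + (-2 * ⟪a, S v⟫) * t) := by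
    intro t
    simp only [map_sub, map_smul, inner_sub_left, inner_sub_right,
      real_inner_smul_left, real_inner_smul_right, h1]
    ring
  have hq : (-2 * ⟪a, S v⟫) = 0 := by
    apply quad_aux (a := ⟪v, S v⟫) (hS_psd v)
    intro t
    have := h t
    rw [expand t] at this
    linarith
  linarith

/-- Proposition 4: `P_* r̂_R = r̂_add`: assume additionally
`⟪v, S v⟫ > 0` for every nonzero `v ∈ V`.  If `r_R ∈ W` minimizes
`r ↦ ‖y − r‖_R²` over `W` and `r_add ∈ V` minimizes `v ↦ ‖y − v‖_*²` over `V`,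
then `r_add` is the unique minimizer over `v ∈ V` of `‖r_R − v‖_*²`; that is,
the `‖·‖_*`-orthogonal projection of `r_R` onto `V` equals `r_add`,
independently of `R`. -/
theorem proposition4_additive_part
    {H : Type*} [NormedAddCommGroup H] [InnerProductSpace ℝ H] [FiniteDimensional ℝ H]
    (S : H →L[ℝ] H)
    (hS_sym : ∀ x y : H, ⟪S x, y⟫ = ⟪x, S y⟫)
    (hS_psd : ∀ x : H, 0 ≤ ⟪x, S x⟫)
    (Q : H →L[ℝ] H)
    (hQ_idem : Q * Q = Q)
    (hQ_sym : ∀ x y : H, ⟪Q x, y⟫ = ⟪x, Q y⟫)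
    (W : Submodule ℝ H) (V : Submodule ℝ H) (hVW : V ≤ W)
    (hQV : ∀ v ∈ V, Q v = 0)
    (R : ℝ) (hR : 0 < R)
    (y : H) (hQy : Q y = 0)
    (hS_posV : ∀ v ∈ V, v ≠ 0 → 0 < ⟪v, S v⟫)
    (r_R : H) (hrR_mem : r_R ∈ W)
    (hrR_min : ∀ r ∈ W,
      ⟪y - r_R, S (y - r_R)⟫ + R * ‖Q (y - r_R)‖ ^ 2 ≤
        ⟪y - r, S (y - r)⟫ + R * ‖Q (y - r)‖ ^ 2)
    (r_add : H) (hra_mem : r_add ∈ V)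
    (hra_min : ∀ v ∈ V, ⟪y - r_add, S (y - r_add)⟫ ≤ ⟪y - v, S (y - v)⟫) :
    (∀ v ∈ V, ⟪r_R - r_add, S (r_R - r_add)⟫ ≤ ⟪r_R - v, S (r_R - v)⟫) ∧
      ∀ v ∈ V, ⟪r_R - v, S (r_R - v)⟫ = ⟪r_R - r_add, S (r_R - r_add)⟫ →
        v = r_add := by
  -- first-order condition for r_R
  have key1 : ∀ v ∈ V, ⟪y - r_R, S v⟫ = 0 := by
    intro v hv
    apply ortho_aux S hS_sym hS_psd
    intro t
    have hmem : r_R + t • v ∈ W := W.add_mem hrR_mem (W.smul_mem t (hVW hv))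
    have h := hrR_min (r_R + t • v) hmem
    have heq : y - (r_R + t • v) = (y - r_R) - t • v := by abel
    rw [heq] at h
    have hQeq : Q ((y - r_R) - t • v) = Q (y - r_R) := by
      rw [map_sub, map_smul, hQV v hv, smul_zero, sub_zero]
    rw [hQeq] at h
    linarith
  -- first-order condition for r_add
  have key2 : ∀ v ∈ V, ⟪y - r_add, S v⟫ = 0 := by
    intro v hv
    apply ortho_aux S hS_sym hS_psd
    intro t
    have hmem : r_add + t • v ∈ V := V.add_mem hra_mem (V.smul_mem t hv)
    have h := hra_min (r_add + t • v) hmem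
    have heq : y - (r_add + t • v) = (y - r_add) - t • v := by abel
    rwa [heq] at h
  have key3 : ∀ v ∈ V, ⟪r_R - r_add, S v⟫ = 0 := by
    intro v hv
    have := key1 v hv
    have h2 := key2 v hv
    have heq : r_R - r_add = (y - r_add) - (y - r_R) := by abel
    rw [heq, inner_sub_left]
    linarith
  -- main expansion
  have expand : ∀ v ∈ V, ⟪r_R - v, S (r_R - v)⟫
      = ⟪r_R - r_add, S (r_R - r_add)⟫ + ⟪r_add - v, S (r_add - v)⟫ := by
    intro v hv
    have hd : r_add - v ∈ V := V.sub_mem hra_mem hv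
    have hc := key3 (r_add - v) hd
    have hc' : ⟪r_add - v, S (r_R - r_add)⟫ = 0 := by
      rw [← hS_sym, real_inner_comm]; exact hc
    have heq : r_R - v = (r_R - r_add) + (r_add - v) := by abel
    rw [heq, inner_add_left, map_add, inner_add_right, inner_add_right]
    linarith
  constructor
  · intro v hv
    have := expand v hv
    have hpsd := hS_psd (r_add - v)
    linarith
  · intro v hv heq
    have h := expand v hv
    have hz : ⟪r_add - v, S (r_add - v)⟫ = 0 := by linarith
    by_contra hne
    have hd : r_add - v ∈ V := V.sub_mem hra_mem hv
    have hdne : r_add - v ≠ 0 := sub_ne_zero.mpr (Ne.symm hne)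
    have := hS_posV _ hd hdne
    linarith
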